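/- c₀ contains a closed subspace isomorphic to the c₀-direct sum (⊕_{n∈ℕ} ℓ₂ⁿ)_{c₀}. -/

import Mathlib

open scoped ZeroAtInfty ENNReal RealInnerProductSpace
open Filter Metric

set_option linter.unnecessarySimpa false in
/-- The `c₀`-direct sum `(⊕_n E_n)_{c₀}`: the subspace of the `ℓ_∞`-product
consisting of those sequences `(x_n)` with `‖x_n‖ → 0`. -/
noncomputable def c0DirectSum (E : ℕ → Type*) [∀ n, NormedAddCommGroup (E n)]
    [∀ n, NormedSpace ℝ (E n)] : Submodule ℝ (lp E ∞) where
  carrier := {x | Tendsto (fun n => ‖(x : ∀ n, E n) n‖) atTop (nhds 0)}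
  zero_mem' := by
    simpa [lp.coeFn_zero] using (tendsto_const_nhds : Tendsto (fun _ : ℕ => (0:ℝ)) atTop _)
  add_mem' := by
    intro a b ha hb
    refine squeeze_zero (fun n => norm_nonneg _)
      (g := fun n => ‖(a : ∀ n, E n) n‖ + ‖(b : ∀ n, E n) n‖) (fun n => ?_)
      (by simpa using ha.add hb)
    simp only [lp.coeFn_add, Pi.add_apply]
    exact norm_add_le _ _
  smul_mem' := by
    intro c x hx
    have : Tendsto (fun n => ‖c‖ * ‖(x : ∀ n, E n) n‖) atTop (nhds 0) := by
      simpa using hx.const_mul ‖c‖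
    refine this.congr fun n => ?_
    simp [lp.coeFn_smul, norm_smul]


abbrev En (n : ℕ) := EuclideanSpace ℝ (Fin n)

lemma exists_net (n : ℕ) : ∃ (a : ℕ → En n) (N : ℕ),
    (∀ i, ‖a i‖ ≤ 1) ∧ (∀ i, N ≤ i → a i = 0) ∧
    (∀ x : En n, ∃ i, ‖x‖ ≤ 2 * ⟪a i, x⟫) := by
  have hcpt : IsCompact (sphere (0 : En n) 1) := isCompact_sphere 0 1
  have hcover : sphere (0 : En n) 1 ⊆
      ⋃ y : sphere (0 : En n) 1, ball (y : En n) (1/2) := by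
    intro u hu
    exact Set.mem_iUnion.2 ⟨⟨u, hu⟩, by simp [mem_ball]⟩
  obtain ⟨t, ht⟩ := hcpt.elim_finite_subcover
    (fun y : sphere (0 : En n) 1 => ball (y : En n) (1/2)) (fun _ => isOpen_ball) hcover
  set l : List (En n) := t.toList.map Subtype.val with hl
  refine ⟨fun i => l.getD i 0, l.length, ?_, ?_, ?_⟩
  · have hall : ∀ b ∈ l, ‖b‖ ≤ 1 := by
      intro b hb
      rw [hl] at hb
      obtain ⟨y, _, rfl⟩ := List.mem_map.1 hb
      have := y.2
      simp only [mem_sphere_iff_norm, sub_zero] at this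
      simp [this]
    intro i
    show ‖l.getD i 0‖ ≤ 1
    rcases lt_or_ge i l.length with h | h
    · rw [List.getD_eq_getElem l 0 h]
      exact hall _ (List.getElem_mem _)
    · rw [List.getD_eq_default l 0 h]; simp
  · intro i h
    exact List.getD_eq_default l 0 h
  · intro x
    rcases eq_or_ne x 0 with rfl | hx
    · exact ⟨0, by simp⟩
    · set u : En n := ‖x‖⁻¹ • x with hu
      have hux : ‖x‖ ≠ 0 := norm_ne_zero_iff.2 hx
      have husph : u ∈ sphere (0 : En n) 1 := by
        simp [hu, norm_smul, abs_of_nonneg (norm_nonneg x), inv_mul_cancel₀ hux]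
      have := ht husph
      simp only [Set.mem_iUnion] at this
      obtain ⟨y, hyt, hyb⟩ := this
      have hyl : (y : En n) ∈ l := by
        rw [hl]; exact List.mem_map.2 ⟨y, Finset.mem_toList.2 hyt, rfl⟩
      obtain ⟨j, hj, hje⟩ := List.getElem_of_mem hyl
      refine ⟨j, ?_⟩
      show ‖x‖ ≤ 2 * ⟪l.getD j 0, x⟫
      rw [List.getD_eq_getElem l 0 hj, hje]
      have hinn : ⟪u, x⟫ = ‖x‖ := by
        rw [hu, real_inner_smul_left, real_inner_self_eq_norm_sq]
        field_simp
      have hdiff : |⟪u - (y : En n), x⟫| ≤ ‖u - (y : En n)‖ * ‖x‖ :=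
        abs_real_inner_le_norm _ _
      have hdist : ‖u - (y : En n)‖ < 1/2 := by
        rw [← dist_eq_norm]; exact mem_ball.1 hyb
      have h2 : ⟪(y : En n), x⟫ = ⟪u, x⟫ - ⟪u - (y : En n), x⟫ := by
        rw [inner_sub_left]; ring
      have hxpos : (0:ℝ) < ‖x‖ := lt_of_le_of_ne (norm_nonneg _) (Ne.symm hux)
      nlinarith [abs_le.1 hdiff, hdiff, mul_lt_mul_of_pos_right hdist hxpos]

lemma exists_nets : ∃ (a : ∀ n, ℕ → En n) (N : ℕ → ℕ), ∀ n,
    (∀ i, ‖a n i‖ ≤ 1) ∧ (∀ i, N n ≤ i → a n i = 0) ∧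
    (∀ x : En n, ∃ i, ‖x‖ ≤ 2 * ⟪a n i, x⟫) := by
  choose a N h1 h2 h3 using exists_net
  exact ⟨a, N, fun n => ⟨h1 n, h2 n, h3 n⟩⟩

noncomputable def dEq : ℕ × ℕ ≃ ℕ := Denumerable.eqv (ℕ × ℕ)

noncomputable def gfun (a : ∀ n, ℕ → En n)
    (x : lp (fun n => EuclideanSpace ℝ (Fin n)) ∞) : ℕ → ℝ := fun k =>
  ⟪a (dEq.symm k).1 (dEq.symm k).2, (x : ∀ n, En n) (dEq.symm k).1⟫

lemma gfun_abs_le (a : ∀ n, ℕ → En n) (ha1 : ∀ n i, ‖a n i‖ ≤ 1)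
    (x : lp (fun n => EuclideanSpace ℝ (Fin n)) ∞) (k : ℕ) :
    |gfun a x k| ≤ ‖(x : ∀ n, En n) (dEq.symm k).1‖ := by
  calc |gfun a x k| ≤ ‖a (dEq.symm k).1 (dEq.symm k).2‖ * ‖(x : ∀ n, En n) (dEq.symm k).1‖ :=
        abs_real_inner_le_norm _ _
    _ ≤ 1 * ‖(x : ∀ n, En n) (dEq.symm k).1‖ :=
        mul_le_mul_of_nonneg_right (ha1 _ _) (norm_nonneg _)
    _ = _ := one_mul _

lemma gfun_tendsto (a : ∀ n, ℕ → En n) (N : ℕ → ℕ) (ha1 : ∀ n i, ‖a n i‖ ≤ 1)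
    (ha0 : ∀ n i, N n ≤ i → a n i = 0)
    (x : lp (fun n => EuclideanSpace ℝ (Fin n)) ∞)
    (hx : Tendsto (fun n => ‖(x : ∀ n, En n) n‖) atTop (nhds 0)) :
    Tendsto (gfun a x) atTop (nhds 0) := by
  rw [← Nat.cofinite_eq_atTop, Metric.tendsto_nhds]
  intro ε hε
  rw [eventually_cofinite]
  rw [← Nat.cofinite_eq_atTop, Metric.tendsto_nhds] at hx
  have hs : {n : ℕ | ¬ dist ‖(x : ∀ n, En n) n‖ 0 < ε}.Finite :=
    eventually_cofinite.1 (hx ε hε)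
  have hB : {p : ℕ × ℕ | ¬ dist ‖(x : ∀ n, En n) p.1‖ 0 < ε ∧ p.2 < N p.1}.Finite := by
    have hsub : {p : ℕ × ℕ | ¬ dist ‖(x : ∀ n, En n) p.1‖ 0 < ε ∧ p.2 < N p.1} ⊆
        ⋃ n ∈ {n : ℕ | ¬ dist ‖(x : ∀ n, En n) n‖ 0 < ε},
          ({n} : Set ℕ) ×ˢ Set.Iio (N n) := by
      rintro ⟨n, i⟩ ⟨h1, h2⟩
      exact Set.mem_biUnion h1 ⟨rfl, h2⟩
    exact Set.Finite.subset (hs.biUnion fun n _ =>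
      ((Set.finite_singleton n).prod (Set.finite_Iio _))) hsub
  refine Set.Finite.subset (hB.image dEq) ?_
  intro k hk
  simp only [Set.mem_setOf_eq, Real.dist_eq, sub_zero] at hk
  have hub := gfun_abs_le a ha1 x k
  have hεle : ε ≤ |gfun a x k| := not_lt.1 hk
  refine ⟨dEq.symm k, ⟨?_, ?_⟩, Equiv.apply_symm_apply _ _⟩
  · intro hlt
    rw [Real.dist_eq, sub_zero, abs_of_nonneg (norm_nonneg _)] at hlt
    exact absurd (lt_of_lt_of_le (lt_of_le_of_lt (hεle.trans hub) hlt) le_rfl) (lt_irrefl ε)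
  · by_contra hge
    push_neg at hge
    have : gfun a x k = 0 := by
      simp [gfun, ha0 _ _ hge]
    rw [this] at hεle
    simp at hεle
    linarith

lemma mem_c0DirectSum_iff (x : lp (fun n => EuclideanSpace ℝ (Fin n)) ∞) :
    x ∈ c0DirectSum (fun n => EuclideanSpace ℝ (Fin n)) ↔
      Tendsto (fun n => ‖(x : ∀ n, En n) n‖) atTop (nhds 0) := Iff.rfl

noncomputable def Tlin (a : ∀ n, ℕ → En n) (N : ℕ → ℕ) (ha1 : ∀ n i, ‖a n i‖ ≤ 1)
    (ha0 : ∀ n i, N n ≤ i → a n i = 0) :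
    ↥(c0DirectSum (fun n => EuclideanSpace ℝ (Fin n))) →ₗ[ℝ] C₀(ℕ, ℝ) where
  toFun x := ⟨⟨gfun a (x : lp (fun n => EuclideanSpace ℝ (Fin n)) ∞),
      continuous_of_discreteTopology⟩, by
    rw [cocompact_eq_cofinite, Nat.cofinite_eq_atTop]
    exact gfun_tendsto a N ha1 ha0 _ ((mem_c0DirectSum_iff _).1 x.2)⟩
  map_add' x y := by
    ext k
    have h : gfun a ((x + y : ↥(c0DirectSum (fun n => EuclideanSpace ℝ (Fin n)))) :
        lp (fun n => EuclideanSpace ℝ (Fin n)) ∞) k =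
        gfun a (x : lp (fun n => EuclideanSpace ℝ (Fin n)) ∞) k +
        gfun a (y : lp (fun n => EuclideanSpace ℝ (Fin n)) ∞) k := by
      simp only [gfun, Submodule.coe_add, lp.coeFn_add, Pi.add_apply]
      exact inner_add_right _ _ _
    exact h
  map_smul' c x := by
    ext k
    have h : gfun a ((c • x : ↥(c0DirectSum (fun n => EuclideanSpace ℝ (Fin n)))) :
        lp (fun n => EuclideanSpace ℝ (Fin n)) ∞) k =
        c * gfun a (x : lp (fun n => EuclideanSpace ℝ (Fin n)) ∞) k := by
      simp only [gfun, Submodule.coe_smul, lp.coeFn_smul, Pi.smul_apply]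
      exact real_inner_smul_right _ _ _
    exact h

lemma Tlin_norm_le (a : ∀ n, ℕ → En n) (N : ℕ → ℕ) (ha1 : ∀ n i, ‖a n i‖ ≤ 1)
    (ha0 : ∀ n i, N n ≤ i → a n i = 0)
    (x : ↥(c0DirectSum (fun n => EuclideanSpace ℝ (Fin n)))) :
    ‖Tlin a N ha1 ha0 x‖ ≤ ‖x‖ := by
  rw [← ZeroAtInftyContinuousMap.norm_toBCF_eq_norm]
  refine BoundedContinuousFunction.norm_le (norm_nonneg _) |>.2 fun k => ?_
  have h1 := gfun_abs_le a ha1 (x : lp (fun n => EuclideanSpace ℝ (Fin n)) ∞) k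
  have h2 : ‖((x : lp (fun n => EuclideanSpace ℝ (Fin n)) ∞) : ∀ n, En n) (dEq.symm k).1‖
      ≤ ‖x‖ := lp.norm_apply_le_norm ENNReal.top_ne_zero _ _
  calc ‖(Tlin a N ha1 ha0 x).toBCF k‖
      = |gfun a (x : lp (fun n => EuclideanSpace ℝ (Fin n)) ∞) k| := by
        simp [Real.norm_eq_abs]; rfl
    _ ≤ ‖x‖ := h1.trans h2

lemma Tlin_norm_ge (a : ∀ n, ℕ → En n) (N : ℕ → ℕ) (ha1 : ∀ n i, ‖a n i‖ ≤ 1)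
    (ha0 : ∀ n i, N n ≤ i → a n i = 0)
    (hnet : ∀ n (x : En n), ∃ i, ‖x‖ ≤ 2 * ⟪a n i, x⟫)
    (x : ↥(c0DirectSum (fun n => EuclideanSpace ℝ (Fin n)))) :
    ‖x‖ ≤ 2 * ‖Tlin a N ha1 ha0 x‖ := by
  have hnn : (0:ℝ) ≤ 2 * ‖Tlin a N ha1 ha0 x‖ := by positivity
  refine lp.norm_le_of_forall_le hnn fun n => ?_
  show ‖((x : lp (fun n => EuclideanSpace ℝ (Fin n)) ∞) : ∀ n, En n) n‖ ≤
    2 * ‖Tlin a N ha1 ha0 x‖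
  obtain ⟨i, hi⟩ := hnet n (((x : lp (fun n => EuclideanSpace ℝ (Fin n)) ∞) : ∀ n, En n) n)
  have hp : dEq.symm (dEq (n, i)) = (n, i) := Equiv.symm_apply_apply _ _
  have hval : gfun a (x : lp (fun n => EuclideanSpace ℝ (Fin n)) ∞) (dEq (n, i)) =
      ⟪a n i, ((x : lp (fun n => EuclideanSpace ℝ (Fin n)) ∞) : ∀ n, En n) n⟫ := by
    show ⟪a (dEq.symm (dEq (n, i))).1 (dEq.symm (dEq (n, i))).2,
      ((x : lp (fun n => EuclideanSpace ℝ (Fin n)) ∞) : ∀ n, En n)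
        (dEq.symm (dEq (n, i))).1⟫ = _
    rw [hp]
  have hptle : ∀ k, |gfun a (x : lp (fun n => EuclideanSpace ℝ (Fin n)) ∞) k|
      ≤ ‖Tlin a N ha1 ha0 x‖ := by
    intro k
    rw [← ZeroAtInftyContinuousMap.norm_toBCF_eq_norm]
    have := BoundedContinuousFunction.norm_coe_le_norm (Tlin a N ha1 ha0 x).toBCF k
    have h' : |(Tlin a N ha1 ha0 x) k| ≤ ‖Tlin a N ha1 ha0 x‖ := by
      simpa [Real.norm_eq_abs] using this
    rw [ZeroAtInftyContinuousMap.norm_toBCF_eq_norm]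
    exact h'
  have h3 := hptle (dEq (n, i))
  rw [hval] at h3
  have h4 := (le_abs_self _).trans h3
  linarith

lemma isClosed_c0DirectSum :
    IsClosed ((c0DirectSum (fun n => EuclideanSpace ℝ (Fin n))) :
      Set (lp (fun n => EuclideanSpace ℝ (Fin n)) ∞)) := by
  refine isClosed_of_closure_subset fun x hx => ?_
  rw [Metric.mem_closure_iff] at hx
  rw [SetLike.mem_coe, mem_c0DirectSum_iff, Metric.tendsto_atTop]
  intro ε hε
  obtain ⟨y, hyS, hxy⟩ := hx (ε/2) (by linarith)
  rw [SetLike.mem_coe, mem_c0DirectSum_iff, Metric.tendsto_atTop] at hyS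
  obtain ⟨M, hM⟩ := hyS (ε/2) (by linarith)
  refine ⟨M, fun n hn => ?_⟩
  have h1 : ‖(x : ∀ n, En n) n - (y : ∀ n, En n) n‖ ≤ ‖x - y‖ := by
    have := lp.norm_apply_le_norm ENNReal.top_ne_zero (x - y) n
    rwa [lp.coeFn_sub, Pi.sub_apply] at this
  have h2 : ‖(y : ∀ n, En n) n‖ < ε/2 := by
    have := hM n hn
    rwa [Real.dist_eq, sub_zero, abs_of_nonneg (norm_nonneg _)] at this
  have h3 : ‖x - y‖ < ε/2 := by rwa [dist_eq_norm] at hxy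
  rw [Real.dist_eq, sub_zero, abs_of_nonneg (norm_nonneg _)]
  calc ‖(x : ∀ n, En n) n‖
      ≤ ‖(x : ∀ n, En n) n - (y : ∀ n, En n) n‖ + ‖(y : ∀ n, En n) n‖ := by
        simpa using norm_add_le ((x : ∀ n, En n) n - (y : ∀ n, En n) n) ((y : ∀ n, En n) n)
    _ < ε/2 + ε/2 := add_lt_add (h1.trans_lt h3) h2
    _ = ε := by ring

set_option maxHeartbeats 2000000 in
/-- `c₀` contains a closed subspace isomorphic to the `c₀`-direct sum
`(⊕_{n∈ℕ} ℓ₂ⁿ)_{c₀}`. -/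
theorem c0_contains_c0_sum_of_euclidean :
    ∃ S : Submodule ℝ C₀(ℕ, ℝ), IsClosed (S : Set C₀(ℕ, ℝ)) ∧
      Nonempty (↥(c0DirectSum (fun n => EuclideanSpace ℝ (Fin n))) ≃L[ℝ] ↥S) := by
  obtain ⟨a, N, hprop⟩ := exists_nets
  have ha1 : ∀ n i, ‖a n i‖ ≤ 1 := fun n => (hprop n).1
  have ha0 : ∀ n i, N n ≤ i → a n i = 0 := fun n => (hprop n).2.1
  have hnet : ∀ n (x : En n), ∃ i, ‖x‖ ≤ 2 * ⟪a n i, x⟫ := fun n => (hprop n).2.2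
  set T := Tlin a N ha1 ha0 with hT
  have hub : ∀ x, ‖T x‖ ≤ ‖x‖ := Tlin_norm_le a N ha1 ha0
  have hlb : ∀ x, ‖x‖ ≤ 2 * ‖T x‖ := Tlin_norm_ge a N ha1 ha0 hnet
  have hlip : LipschitzWith 1 T := by
    refine LipschitzWith.of_dist_le_mul fun x y => ?_
    rw [dist_eq_norm, dist_eq_norm, ← map_sub]
    simpa using hub (x - y)
  have hanti : AntilipschitzWith 2 T := by
    refine AntilipschitzWith.of_le_mul_dist fun x y => ?_
    rw [dist_eq_norm, dist_eq_norm, ← map_sub]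
    simpa using hlb (x - y)
  haveI : CompleteSpace ↥(c0DirectSum (fun n => EuclideanSpace ℝ (Fin n))) :=
    isClosed_c0DirectSum.completeSpace_coe
  have hinj : Function.Injective T := hanti.injective
  refine ⟨LinearMap.range T, ?_, ⟨?_⟩⟩
  · rw [LinearMap.coe_range]
    exact hanti.isClosed_range hlip.uniformContinuous
  · set e := LinearEquiv.ofInjective T hinj with he
    have heq : ∀ x, ((e x : ↥(LinearMap.range T)) : C₀(ℕ, ℝ)) = T x := fun x =>
      LinearEquiv.ofInjective_apply (f := T) x
    refine { e with continuous_toFun := ?_, continuous_invFun := ?_ }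
    · show Continuous fun x => e x
      refine continuous_induced_rng.2 ?_
      have h : (Subtype.val ∘ fun x => e x) = fun x => T x := funext heq
      rw [h]
      exact hlip.continuous
    · show Continuous fun y => e.symm y
      refine AddMonoidHomClass.continuous_of_bound e.symm.toLinearMap 2 fun y => ?_
      have h1 : T (e.symm y) = (y : C₀(ℕ, ℝ)) := by
        rw [← heq (e.symm y), e.apply_symm_apply]
      have h2 := hlb (e.symm y)
      rw [h1] at h2
      exact h2
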